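/- Let W(y) = min_{k∈ℤ} (y − k)², let γ > 0 and let 0 < T ≤ γ/(2+γ). Then for every initial datum y₀ ∈ [0, 1/2), every orbit (y_h) of the linearized scheme with parameter T satisfies y_h = (γ/(2+γ))^h · (y₀ + T/2) − T/2 for all h ∈ ℕ; in particular y_h → −T/2 as h → ∞, lim_{h→∞} (y₀ − y_h)/h = 0, and the motion is pinned. -/

import Mathlib

/-- The 1-periodic piecewise-quadratic potential `W y = min_{k ∈ ℤ} (y - k) ^ 2`. -/
noncomputable def Wq (y : ℝ) : ℝ := ⨅ k : ℤ, (y - (k : ℝ)) ^ 2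

/-- An orbit of the linearized minimizing-movement scheme with parameter `T` and
spatial/temporal ratio `γ`: each `y (i+1)` is a global minimizer over `ℝ` of
`t ↦ T * t + W t + γ / 2 * (t - y i) ^ 2`. -/
def IsOrbit (W : ℝ → ℝ) (γ T : ℝ) (y : ℕ → ℝ) : Prop :=
  ∀ i : ℕ, ∀ t : ℝ,
    T * y (i + 1) + W (y (i + 1)) + γ / 2 * (y (i + 1) - y i) ^ 2 ≤
      T * t + W t + γ / 2 * (t - y i) ^ 2

lemma Wq_bdd (t : ℝ) : BddBelow (Set.range fun k : ℤ => (t - (k:ℝ)) ^ 2) :=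
  ⟨0, by rintro x ⟨k, rfl⟩; positivity⟩

lemma Wq_le (t : ℝ) (k : ℤ) : Wq t ≤ (t - (k:ℝ))^2 := ciInf_le (Wq_bdd t) k

lemma Wq_eq_round (t : ℝ) : Wq t = (t - (round t : ℝ))^2 := by
  refine le_antisymm (Wq_le t (round t)) (le_ciInf fun k => ?_)
  rcases eq_or_ne k (round t) with rfl | hk
  · exact le_rfl
  · have h1 : |t - (round t : ℝ)| ≤ 1/2 := abs_sub_round t
    have h2 : (1 : ℝ) ≤ |(round t : ℝ) - k| := by
      have : (round t : ℝ) - k = ((round t - k : ℤ) : ℝ) := by push_cast; ring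
      rw [this]
      exact_mod_cast Int.one_le_abs (sub_ne_zero.mpr hk.symm)
    have h3 : (1:ℝ)/2 ≤ |t - (k:ℝ)| := by
      have := abs_sub_abs_le_abs_sub ((round t : ℝ) - k) (t - (k:ℝ))
      have h4 : |(round t:ℝ) - k| ≤ |t - round t| + |t - k| := by
        calc |(round t:ℝ) - k| = |(round t - t) + (t - k)| := by ring_nf
          _ ≤ |(round t:ℝ) - t| + |t - k| := abs_add_le _ _
          _ = |t - (round t:ℝ)| + |t - k| := by rw [abs_sub_comm]
      linarith
    have := abs_nonneg (t - (k:ℝ))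
    calc (t - (round t:ℝ))^2 = |t - (round t:ℝ)|^2 := (sq_abs _).symm
      _ ≤ |t - (k:ℝ)|^2 := by nlinarith [abs_nonneg (t - (round t:ℝ))]
      _ = (t - (k:ℝ))^2 := sq_abs _

lemma step_lemma (γ T : ℝ) (hγ : 0 < γ) (hT0 : 0 < T) (hT : T ≤ γ / (2 + γ))
    (a b : ℝ) (ha1 : -(T/2) < a) (ha2 : a < 1/2)
    (hb : ∀ t : ℝ, T * b + Wq b + γ / 2 * (b - a) ^ 2 ≤ T * t + Wq t + γ / 2 * (t - a) ^ 2) :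
    b = (γ * a - T) / (2 + γ) := by
  have hS : (0:ℝ) < 2 + γ := by linarith
  set m : ℝ := (γ * a - T) / (2 + γ) with hm
  have hTle : T * (2 + γ) ≤ γ := (le_div_iff₀ hS).mp hT
  have hT1 : T < 1 := by nlinarith
  have hm1 : -(T/2) ≤ m := by
    rw [hm, le_div_iff₀ hS]; nlinarith
  have hm2 : m < 1/2 := by
    rw [hm, div_lt_iff₀ hS]; nlinarith
  have hroundm : round m = 0 := by
    rw [round_eq_zero_iff]; constructor <;> [linarith; linarith]
  have hWm : Wq m = m ^ 2 := by
    rw [Wq_eq_round, hroundm]; norm_num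
  have key : ∀ (k : ℤ) (t : ℝ),
      (T * t + (t - (k:ℝ))^2 + γ/2 * (t - a)^2) - (T * m + m^2 + γ/2 * (m - a)^2)
        = (2+γ)/2 * (t - m - 2*(k:ℝ)/(2+γ))^2
          + (k:ℝ) * ((k:ℝ)*γ - 2*γ*a + 2*T) / (2+γ) := by
    intro k t
    rw [hm]; field_simp; ring
  have hknum : ∀ k : ℤ, k ≠ 0 → 0 < (k:ℝ) * ((k:ℝ)*γ - 2*γ*a + 2*T) := by
    intro k hk0
    rcases hk0.lt_or_gt with hk | hk
    · have hu : (1:ℝ) ≤ -(k:ℝ) := by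
        have : k ≤ -1 := by omega
        have h' : ((k:ℤ):ℝ) ≤ ((-1:ℤ):ℝ) := by exact_mod_cast this
        push_cast at h'; linarith
      have hc : (0:ℝ) < γ + 2*γ*a - 2*T := by
        nlinarith [mul_pos hγ (show (0:ℝ) < 2*a + T by linarith)]
      nlinarith [mul_nonneg (mul_nonneg (by linarith : (0:ℝ) ≤ -(k:ℝ) - 1) hγ.le)
          (by linarith : (0:ℝ) ≤ -(k:ℝ)),
        mul_nonneg (by linarith : (0:ℝ) ≤ -(k:ℝ) - 1) hc.le]
    · have hu : (1:ℝ) ≤ (k:ℝ) := by exact_mod_cast hk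
      have hc : (0:ℝ) < γ - 2*γ*a + 2*T := by
        nlinarith [mul_pos hγ (show (0:ℝ) < 1 - 2*a by linarith)]
      nlinarith [mul_nonneg (mul_nonneg (by linarith : (0:ℝ) ≤ (k:ℝ) - 1) hγ.le)
          (by linarith : (0:ℝ) ≤ (k:ℝ)),
        mul_nonneg (by linarith : (0:ℝ) ≤ (k:ℝ) - 1) hc.le]
  have strict : ∀ (k : ℤ) (t : ℝ), t ≠ m →
      (T * m + m^2 + γ/2 * (m - a)^2) < T * t + (t - (k:ℝ))^2 + γ/2 * (t - a)^2 := by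
    intro k t ht
    have hkey := key k t
    rcases eq_or_ne k 0 with rfl | hk0
    · have hpos : 0 < (2+γ)/2 * (t - m - 2*((0:ℤ):ℝ)/(2+γ))^2 := by
        have hne : t - m - 2*((0:ℤ):ℝ)/(2+γ) ≠ 0 := by
          push_cast; simpa [sub_ne_zero] using sub_ne_zero.mpr ht
        positivity
      push_cast at hkey hpos ⊢
      norm_num at hkey hpos
      linarith
    · have h1 : 0 < (k:ℝ) * ((k:ℝ)*γ - 2*γ*a + 2*T) / (2+γ) :=
        div_pos (hknum k hk0) hS
      nlinarith [sq_nonneg (t - m - 2*(k:ℝ)/(2+γ))]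
  by_contra hne
  have h1 := hb m
  rw [Wq_eq_round b, hWm] at h1
  have h2 := strict (round b) b hne
  linarith

theorem stmt_15 (γ : ℝ) (hγ : 0 < γ) (T : ℝ) (hT0 : 0 < T) (hT : T ≤ γ / (2 + γ))
    (y₀ : ℝ) (hy₀ : y₀ ∈ Set.Ico (0 : ℝ) (1 / 2))
    (y : ℕ → ℝ) (hy0 : y 0 = y₀) (hy : IsOrbit Wq γ T y) :
    (∀ h : ℕ, y h = (γ / (2 + γ)) ^ h * (y₀ + T / 2) - T / 2) ∧
    Filter.Tendsto y Filter.atTop (nhds (-(T / 2))) ∧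
    Filter.Tendsto (fun h : ℕ => (y 0 - y h) / (h : ℝ)) Filter.atTop (nhds 0) := by
  obtain ⟨hy₀0, hy₀1⟩ := hy₀
  have hS : (0:ℝ) < 2 + γ := by linarith
  set r : ℝ := γ / (2 + γ) with hrdef
  set s : ℝ := y₀ + T / 2 with hsdef
  have hs : 0 < s := by positivity
  have hr0 : 0 < r := div_pos hγ hS
  have hr1 : r < 1 := (div_lt_one hS).mpr (by linarith)
  have hform : ∀ h : ℕ, y h = r ^ h * s - T / 2 := by
    intro h
    induction h with
    | zero => simp [hy0, hsdef]
    | succ n ih =>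
      have hb1 : -(T/2) < y n := by
        rw [ih]; nlinarith [mul_pos (pow_pos hr0 n) hs]
      have hb2 : y n < 1/2 := by
        rw [ih]
        have hp : r ^ n ≤ 1 := pow_le_one₀ hr0.le hr1.le
        nlinarith
      have hstep := step_lemma γ T hγ hT0 hT (y n) (y (n+1)) hb1 hb2 (hy n)
      have hr' : r * (2 + γ) = γ := by rw [hrdef]; exact div_mul_cancel₀ γ hS.ne'
      rw [hstep, ih, pow_succ, div_eq_iff hS.ne']
      linear_combination (-(r ^ n * s)) * hr'
  refine ⟨hform, ?_, ?_⟩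
  · have h0 : Filter.Tendsto (fun h : ℕ => r ^ h) Filter.atTop (nhds 0) :=
      tendsto_pow_atTop_nhds_zero_of_lt_one hr0.le hr1
    have h1 := (h0.mul_const s).sub_const (T/2)
    rw [zero_mul, zero_sub] at h1
    exact h1.congr (fun h => (hform h).symm)
  · have h0 : Filter.Tendsto (fun h : ℕ => r ^ h) Filter.atTop (nhds 0) :=
      tendsto_pow_atTop_nhds_zero_of_lt_one hr0.le hr1
    have h1 : Filter.Tendsto (fun h : ℕ => y 0 - y h) Filter.atTop (nhds (y 0 + T/2)) := by
      have := (tendsto_const_nhds (x := y 0) (f := Filter.atTop (α := ℕ))).sub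
        ((h0.mul_const s).sub_const (T/2) |>.congr (fun h => (hform h).symm))
      simpa using this
    have h2 : Filter.Tendsto (fun h : ℕ => ((h : ℝ))⁻¹) Filter.atTop (nhds 0) :=
      tendsto_inv_atTop_nhds_zero_nat
    have h3 := h1.mul h2
    rw [mul_zero] at h3
    exact h3.congr (fun h => (div_eq_mul_inv _ _).symm)
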